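/- Let α ∈ (0,1), C ⊆ {1,…,n}, and define 𝒯 : ℝ^n → ℝ^n by 𝒯(u) := (1−α)T_C u + α T_C D S(Dᵀu). Then 𝒯 is ((1−α)/2)-averaged nonexpansive; that is, the operator 𝒯₁ := (2/(1+α))(𝒯 − ((1−α)/2)·I) satisfies ‖𝒯₁u₁ − 𝒯₁u₂‖₂ ≤ ‖u₁ − u₂‖₂ for all u₁, u₂ ∈ ℝ^n, and 𝒯 = ((1−α)/2)·I + ((1+α)/2)·𝒯₁. -/

import Mathlib

open Matrix

noncomputable section

/-- Matrix–vector multiplication as a map between Euclidean spaces. -/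
def mulVecE {n m : ℕ} (A : Matrix (Fin n) (Fin m) ℝ) (v : EuclideanSpace ℝ (Fin m)) :
    EuclideanSpace ℝ (Fin n) :=
  (EuclideanSpace.equiv (Fin n) ℝ).symm (A.mulVec ((EuclideanSpace.equiv (Fin m) ℝ) v))

/-- The coordinate projection `T_C` onto an index set `C`. -/
def Tmat {n : ℕ} (C : Set (Fin n)) (u : EuclideanSpace ℝ (Fin n)) :
    EuclideanSpace ℝ (Fin n) :=
  (EuclideanSpace.equiv (Fin n) ℝ).symm (C.indicator (fun i => u i))

open RealInnerProductSpace

lemma inner_euc {k : ℕ} (x y : EuclideanSpace ℝ (Fin k)) : ⟪x, y⟫ = x ⬝ᵥ y := by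
  simp [PiLp.inner_apply, RCLike.inner_apply, mul_comm, dotProduct]

lemma inner_mulVecE {n m : ℕ} (D : Matrix (Fin n) (Fin m) ℝ) (hD : Dᵀ * D = 1)
    (v w : EuclideanSpace ℝ (Fin m)) : ⟪mulVecE D v, mulVecE D w⟫ = ⟪v, w⟫ := by
  rw [inner_euc, inner_euc]
  show (D.mulVec v) ⬝ᵥ (D.mulVec w) = v ⬝ᵥ w
  rw [Matrix.dotProduct_mulVec, ← Matrix.mulVec_transpose, Matrix.mulVec_mulVec, hD,
    Matrix.one_mulVec]

lemma inner_transp {n m : ℕ} (D : Matrix (Fin n) (Fin m) ℝ)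
    (u : EuclideanSpace ℝ (Fin n)) (w : EuclideanSpace ℝ (Fin m)) :
    ⟪mulVecE Dᵀ u, w⟫ = ⟪u, mulVecE D w⟫ := by
  rw [inner_euc, inner_euc]
  show (Dᵀ.mulVec u) ⬝ᵥ w = u ⬝ᵥ (D.mulVec w)
  rw [Matrix.dotProduct_mulVec, ← Matrix.mulVec_transpose]

lemma mulVecE_sub {n m : ℕ} (A : Matrix (Fin n) (Fin m) ℝ) (u v : EuclideanSpace ℝ (Fin m)) :
    mulVecE A (u - v) = mulVecE A u - mulVecE A v := by
  ext i; simp [mulVecE, Matrix.mulVec_sub]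

lemma mulVecE_add {n m : ℕ} (A : Matrix (Fin n) (Fin m) ℝ) (u v : EuclideanSpace ℝ (Fin m)) :
    mulVecE A (u + v) = mulVecE A u + mulVecE A v := by
  ext i; simp [mulVecE, Matrix.mulVec_add]

lemma mulVecE_smul {n m : ℕ} (A : Matrix (Fin n) (Fin m) ℝ) (c : ℝ)
    (u : EuclideanSpace ℝ (Fin m)) : mulVecE A (c • u) = c • mulVecE A u := by
  ext i; simp [mulVecE, Matrix.mulVec_smul]

lemma norm_mulVecE {n m : ℕ} (D : Matrix (Fin n) (Fin m) ℝ) (hD : Dᵀ * D = 1)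
    (v : EuclideanSpace ℝ (Fin m)) : ‖mulVecE D v‖ = ‖v‖ := by
  have h := inner_mulVecE D hD v v
  rw [real_inner_self_eq_norm_sq, real_inner_self_eq_norm_sq] at h
  calc ‖mulVecE D v‖ = Real.sqrt (‖mulVecE D v‖ ^ 2) := (Real.sqrt_sq (norm_nonneg _)).symm
    _ = Real.sqrt (‖v‖ ^ 2) := by rw [h]
    _ = ‖v‖ := Real.sqrt_sq (norm_nonneg _)

lemma norm_transp_le {n m : ℕ} (D : Matrix (Fin n) (Fin m) ℝ) (hD : Dᵀ * D = 1)
    (u : EuclideanSpace ℝ (Fin n)) : ‖mulVecE Dᵀ u‖ ≤ ‖u‖ := by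
  have h : ‖mulVecE Dᵀ u‖ ^ 2 = ⟪u, mulVecE D (mulVecE Dᵀ u)⟫ := by
    rw [← inner_transp, real_inner_self_eq_norm_sq]
  have h2 : ⟪u, mulVecE D (mulVecE Dᵀ u)⟫ ≤ ‖u‖ * ‖mulVecE Dᵀ u‖ := by
    calc ⟪u, mulVecE D (mulVecE Dᵀ u)⟫ ≤ ‖u‖ * ‖mulVecE D (mulVecE Dᵀ u)‖ :=
      real_inner_le_norm _ _
    _ = ‖u‖ * ‖mulVecE Dᵀ u‖ := by rw [norm_mulVecE D hD]
  rcases eq_or_lt_of_le (norm_nonneg (mulVecE Dᵀ u)) with h0 | h0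
  · rw [← h0]; exact norm_nonneg u
  · nlinarith

lemma Tmat_sub {n : ℕ} (C : Set (Fin n)) (u v : EuclideanSpace ℝ (Fin n)) :
    Tmat C (u - v) = Tmat C u - Tmat C v := by
  ext i; by_cases h : i ∈ C <;>
    simp [Tmat, Set.indicator_of_mem, Set.indicator_of_notMem, h, EuclideanSpace.equiv]

lemma inner_Tmat_Tmat {n : ℕ} (C : Set (Fin n)) (u v : EuclideanSpace ℝ (Fin n)) :
    ⟪Tmat C u, v⟫ = ⟪Tmat C u, Tmat C v⟫ := by
  rw [inner_euc, inner_euc]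
  refine Finset.sum_congr rfl fun i _ => ?_
  by_cases h : i ∈ C <;>
    simp [Tmat, Set.indicator_of_mem, Set.indicator_of_notMem, h]

lemma inner_Tmat_cross {n : ℕ} (C : Set (Fin n)) (v a : EuclideanSpace ℝ (Fin n)) :
    ⟪Tmat C v, Tmat C a - a⟫ = 0 := by
  rw [inner_sub_right, inner_Tmat_Tmat C v a]; ring

lemma norm_Tmat_le {n : ℕ} (C : Set (Fin n)) (u : EuclideanSpace ℝ (Fin n)) :
    ‖Tmat C u‖ ≤ ‖u‖ := by
  have h : ‖Tmat C u‖ ^ 2 = ⟪Tmat C u, u⟫ := by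
    rw [inner_Tmat_Tmat, real_inner_self_eq_norm_sq]
  have h2 : ⟪Tmat C u, u⟫ ≤ ‖Tmat C u‖ * ‖u‖ := real_inner_le_norm _ _
  rcases eq_or_lt_of_le (norm_nonneg (Tmat C u)) with h0 | h0
  · rw [← h0]; exact norm_nonneg u
  · nlinarith

/-- Pythagoras for the projection `Tmat`. -/
lemma Tmat_pythagoras {n : ℕ} (C : Set (Fin n)) (a : EuclideanSpace ℝ (Fin n)) :
    ‖Tmat C a‖ ^ 2 + ‖Tmat C a - a‖ ^ 2 = ‖a‖ ^ 2 := by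
  have h := inner_Tmat_cross C a a
  have hexp : ‖Tmat C a - a‖ ^ 2
      = ‖Tmat C a‖ ^ 2 - 2 * ⟪Tmat C a, a⟫ + ‖a‖ ^ 2 := by
    rw [← real_inner_self_eq_norm_sq, ← real_inner_self_eq_norm_sq,
      ← real_inner_self_eq_norm_sq, inner_sub_sub_self, real_inner_comm a (Tmat C a)]
    ring
  rw [inner_sub_right, real_inner_self_eq_norm_sq] at h
  nlinarith [h, hexp]

/-- Scalar estimate. -/
lemma scalar_est (k α x y z A e W : ℝ) (hk0 : 0 < k) (hα0 : 0 < α)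
    (hxnn : 0 ≤ x) (hynn : 0 ≤ y) (hAnn : 0 ≤ A) (henn : 0 ≤ e)
    (hy : y ≤ A) (hpyth : x ^ 2 + z ^ 2 = A ^ 2)
    (hele : e ≤ k * x + α * y) (hWnn : 0 ≤ W)
    (hWsq : W ^ 2 = e ^ 2 + k ^ 2 * z ^ 2) : W ≤ (k + α) * A := by
  have hx : x ≤ A := by nlinarith [sq_nonneg z]
  have he2 : e ^ 2 ≤ (k * x + α * y) ^ 2 := by nlinarith
  have hxy : x * y ≤ A ^ 2 := by nlinarith
  have hy2 : y ^ 2 ≤ A ^ 2 := by nlinarith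
  have h1 : 2 * k * α * (x * y) ≤ 2 * k * α * A ^ 2 := by
    have := mul_pos hk0 hα0; nlinarith
  have h2 : α ^ 2 * y ^ 2 ≤ α ^ 2 * A ^ 2 := by nlinarith [sq_nonneg α]
  have h3 : k ^ 2 * x ^ 2 + k ^ 2 * z ^ 2 = k ^ 2 * A ^ 2 := by nlinarith [hpyth]
  have hW2 : W ^ 2 ≤ ((k + α) * A) ^ 2 := by nlinarith [he2, h1, h2, h3]
  have h0 : (0:ℝ) ≤ (k + α) * A := by positivity
  exact le_of_pow_le_pow_left₀ two_ne_zero h0 hW2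

/-- The key norm estimate for the averaged operator. -/
lemma key_est {n : ℕ} (C : Set (Fin n)) (a q : EuclideanSpace ℝ (Fin n)) (α : ℝ)
    (hα0 : 0 < α) (hα1 : α < 1) (hq : ‖q‖ ≤ ‖a‖) :
    ‖(1 - α) • Tmat C a + α • Tmat C q - ((1 - α) / 2) • a‖ ≤ ((1 + α) / 2) * ‖a‖ := by
  have hk0 : 0 < (1 - α) / 2 := by linarith
  have hWsplit : (1 - α) • Tmat C a + α • Tmat C q - ((1 - α) / 2) • a
      = (((1 - α) / 2) • Tmat C a + α • Tmat C q) + ((1 - α) / 2) • (Tmat C a - a) := by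
    rw [smul_sub]
    have h : (1 - α) • Tmat C a
        = ((1 - α) / 2) • Tmat C a + ((1 - α) / 2) • Tmat C a := by
      rw [← add_smul]; congr 1; ring
    rw [h]; abel
  have hcross : ⟪((1 - α) / 2) • Tmat C a + α • Tmat C q, Tmat C a - a⟫ = 0 := by
    rw [inner_add_left, real_inner_smul_left, real_inner_smul_left,
      inner_Tmat_cross, inner_Tmat_cross]
    ring
  have hWsq : ‖(1 - α) • Tmat C a + α • Tmat C q - ((1 - α) / 2) • a‖ ^ 2
      = ‖((1 - α) / 2) • Tmat C a + α • Tmat C q‖ ^ 2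
        + ((1 - α) / 2) ^ 2 * ‖Tmat C a - a‖ ^ 2 := by
    rw [hWsplit, norm_add_sq_real, real_inner_smul_right, hcross, norm_smul,
      Real.norm_eq_abs, abs_of_pos hk0]
    ring
  have hEle : ‖((1 - α) / 2) • Tmat C a + α • Tmat C q‖
      ≤ ((1 - α) / 2) * ‖Tmat C a‖ + α * ‖Tmat C q‖ := by
    calc ‖((1 - α) / 2) • Tmat C a + α • Tmat C q‖
        ≤ ‖((1 - α) / 2) • Tmat C a‖ + ‖α • Tmat C q‖ := norm_add_le _ _
      _ = ((1 - α) / 2) * ‖Tmat C a‖ + α * ‖Tmat C q‖ := by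
        rw [norm_smul, norm_smul, Real.norm_eq_abs, Real.norm_eq_abs,
          abs_of_pos hk0, abs_of_pos hα0]
  have hK : (1 + α) / 2 = (1 - α) / 2 + α := by ring
  rw [hK]
  exact scalar_est ((1 - α) / 2) α (‖Tmat C a‖) (‖Tmat C q‖) (‖Tmat C a - a‖) (‖a‖)
    (‖((1 - α) / 2) • Tmat C a + α • Tmat C q‖) _ hk0 hα0
    (norm_nonneg _) (norm_nonneg _) (norm_nonneg _) (norm_nonneg _)
    ((norm_Tmat_le C q).trans hq) (Tmat_pythagoras C a) hEle (norm_nonneg _) hWsq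

/-- Nonexpansiveness of the proximal map `S`. -/
lemma S_nonexpansive {m p : ℕ} (ψ : EuclideanSpace ℝ (Fin p) → ℝ)
    (hconv : ConvexOn ℝ Set.univ ψ)
    (B : Matrix (Fin p) (Fin m) ℝ) (c : ℝ) (hc : 0 < c)
    (S : EuclideanSpace ℝ (Fin m) → EuclideanSpace ℝ (Fin m))
    (hS : ∀ x v, ψ (mulVecE B (S x)) + c * ‖S x - x‖ ^ 2 ≤
      ψ (mulVecE B v) + c * ‖v - x‖ ^ 2)
    (x y : EuclideanSpace ℝ (Fin m)) : ‖S x - S y‖ ≤ ‖x - y‖ := by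
  -- key inequality for arbitrary base points and t ∈ (0,1]
  have key : ∀ x y : EuclideanSpace ℝ (Fin m), ∀ t : ℝ, 0 < t → t ≤ 1 →
      t * (ψ (mulVecE B (S x)) - ψ (mulVecE B (S y)))
        ≤ c * (2 * t * ⟪S x - x, S y - S x⟫ + t ^ 2 * ‖S y - S x‖ ^ 2) := by
    intro x y t ht0 ht1
    set v : EuclideanSpace ℝ (Fin m) := S x + t • (S y - S x) with hv
    have hvc : v = (1 - t) • S x + t • S y := by
      rw [hv, smul_sub, sub_smul, one_smul]; abel
    have hBv : mulVecE B v = (1 - t) • mulVecE B (S x) + t • mulVecE B (S y) := by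
      rw [hvc, mulVecE_add, mulVecE_smul, mulVecE_smul]
    have hψv : ψ (mulVecE B v) ≤ (1 - t) * ψ (mulVecE B (S x)) + t * ψ (mulVecE B (S y)) := by
      rw [hBv]
      exact hconv.2 (Set.mem_univ _) (Set.mem_univ _) (by linarith) ht0.le (by ring)
    have hnv : ‖v - x‖ ^ 2 = ‖S x - x‖ ^ 2 + 2 * t * ⟪S x - x, S y - S x⟫
        + t ^ 2 * ‖S y - S x‖ ^ 2 := by
      have hvx : v - x = (S x - x) + t • (S y - S x) := by rw [hv]; abel
      rw [hvx, norm_add_sq_real, real_inner_smul_right, norm_smul,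
        Real.norm_eq_abs, abs_of_pos ht0]
      ring
    have h := hS x v
    rw [hnv] at h
    nlinarith [h, hψv]
  have key2 : ∀ t : ℝ, 0 < t → t ≤ 1 →
      (1 - t) * ‖S x - S y‖ ^ 2 ≤ ⟪x - y, S x - S y⟫ := by
    intro t ht0 ht1
    have h1 := key x y t ht0 ht1
    have h2 := key y x t ht0 ht1
    have hrev : S x - S y = -(S y - S x) := by abel
    have hrev2 : ‖S x - S y‖ = ‖S y - S x‖ := norm_sub_rev _ _
    have hi2 : ⟪S y - y, S x - S y⟫ = -⟪S y - y, S y - S x⟫ := by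
      rw [hrev, inner_neg_right]
    rw [hi2, hrev2] at h2
    -- add h1 and h2, divide by 2*c*t
    have hsum : 0 ≤ 2 * c * t * (⟪S x - x, S y - S x⟫ - ⟪S y - y, S y - S x⟫
        + t * ‖S y - S x‖ ^ 2) := by nlinarith [h1, h2]
    have hct : 0 < 2 * c * t := by positivity
    have hsum2 : 0 ≤ ⟪S x - x, S y - S x⟫ - ⟪S y - y, S y - S x⟫
        + t * ‖S y - S x‖ ^ 2 := nonneg_of_mul_nonneg_right ?_ hct
    · -- rewrite the inner products
      have hexp : ⟪S x - x, S y - S x⟫ - ⟪S y - y, S y - S x⟫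
          = -‖S y - S x‖ ^ 2 + ⟪x - y, S x - S y⟫ := by
        have e1 : S x - x = (S x - S y) + (S y - x) := by abel
        rw [← inner_sub_left]
        have e2 : (S x - x) - (S y - y) = (S x - S y) - (x - y) := by abel
        rw [e2, inner_sub_left, hrev, inner_neg_right, inner_neg_left,
          real_inner_self_eq_norm_sq]
        ring
      rw [hexp] at hsum2
      rw [hrev2]
      linarith
    · linarith [hsum]
  -- conclude
  rcases eq_or_lt_of_le (norm_nonneg (S x - S y)) with h0 | h0
  · rw [← h0]; exact norm_nonneg _
  · have hCS : ∀ t : ℝ, 0 < t → t ≤ 1 →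
        (1 - t) * ‖S x - S y‖ ^ 2 ≤ ‖x - y‖ * ‖S x - S y‖ := fun t ht0 ht1 =>
      (key2 t ht0 ht1).trans (real_inner_le_norm _ _)
    have hmain : ∀ t : ℝ, 0 < t → t ≤ 1 → (1 - t) * ‖S x - S y‖ ≤ ‖x - y‖ := by
      intro t ht0 ht1
      have := hCS t ht0 ht1
      nlinarith
    refine le_of_forall_pos_le_add fun ε hε => ?_
    rcases le_or_gt (‖S x - S y‖) ε with hle | hlt
    · have := hmain 1 one_pos le_rfl
      nlinarith [norm_nonneg (x - y)]
    · have ht0 : 0 < ε / ‖S x - S y‖ := by positivity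
      have ht1 : ε / ‖S x - S y‖ ≤ 1 := by
        rw [div_le_one h0]; linarith
      have := hmain _ ht0 ht1
      have hd : (ε / ‖S x - S y‖) * ‖S x - S y‖ = ε := div_mul_cancel₀ _ (ne_of_gt h0)
      nlinarith

/-- For `α ∈ (0,1)` the operator `𝒯(u) = (1−α)T_C u + α T_C D S(Dᵀu)`
is `((1−α)/2)`-averaged nonexpansive: `𝒯₁ := (2/(1+α))(𝒯 − ((1−α)/2)·I)` is nonexpansive
and `𝒯 = ((1−α)/2)·I + ((1+α)/2)·𝒯₁.` -/
theorem stmt17 (n m p : ℕ) (ψ : EuclideanSpace ℝ (Fin p) → ℝ)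
    (hconv : ConvexOn ℝ Set.univ ψ) (hdiff : ContDiff ℝ 1 ψ)
    (B : Matrix (Fin p) (Fin m) ℝ) (D : Matrix (Fin n) (Fin m) ℝ) (hD : Dᵀ * D = 1)
    (lam γ : ℝ) (hlam : 0 < lam) (hγ : 0 < γ)
    (S : EuclideanSpace ℝ (Fin m) → EuclideanSpace ℝ (Fin m))
    (hS : ∀ x v, ψ (mulVecE B (S x)) + (lam / (2 * γ)) * ‖S x - x‖ ^ 2 ≤
      ψ (mulVecE B v) + (lam / (2 * γ)) * ‖v - x‖ ^ 2)
    (α : ℝ) (hα0 : 0 < α) (hα1 : α < 1)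
    (C : Set (Fin n))
    (T T₁ : EuclideanSpace ℝ (Fin n) → EuclideanSpace ℝ (Fin n))
    (hT : ∀ u, T u = (1 - α) • Tmat C u + α • Tmat C (mulVecE D (S (mulVecE Dᵀ u))))
    (hT₁ : ∀ u, T₁ u = (2 / (1 + α)) • (T u - ((1 - α) / 2) • u)) :
    (∀ u₁ u₂, ‖T₁ u₁ - T₁ u₂‖ ≤ ‖u₁ - u₂‖) ∧
    (∀ u, T u = ((1 - α) / 2) • u + ((1 + α) / 2) • T₁ u) := by
  have hc : 0 < lam / (2 * γ) := by positivity
  have hSne := S_nonexpansive ψ hconv B (lam / (2 * γ)) hc S hS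
  have hα1' : (0:ℝ) < 1 + α := by linarith
  constructor
  · intro u₁ u₂
    set a : EuclideanSpace ℝ (Fin n) := u₁ - u₂ with ha
    set q : EuclideanSpace ℝ (Fin n) :=
      mulVecE D (S (mulVecE Dᵀ u₁)) - mulVecE D (S (mulVecE Dᵀ u₂)) with hqdef
    have hq : ‖q‖ ≤ ‖a‖ := by
      rw [hqdef, ← mulVecE_sub, norm_mulVecE D hD]
      calc ‖S (mulVecE Dᵀ u₁) - S (mulVecE Dᵀ u₂)‖
          ≤ ‖mulVecE Dᵀ u₁ - mulVecE Dᵀ u₂‖ := hSne _ _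
        _ = ‖mulVecE Dᵀ a‖ := by rw [ha, mulVecE_sub]
        _ ≤ ‖a‖ := norm_transp_le D hD a
    have hTdiff : T u₁ - T u₂ = (1 - α) • Tmat C a + α • Tmat C q := by
      rw [hT u₁, hT u₂, ha, hqdef, Tmat_sub, Tmat_sub, smul_sub, smul_sub]
      abel
    have hT1diff : T₁ u₁ - T₁ u₂
        = (2 / (1 + α)) • ((1 - α) • Tmat C a + α • Tmat C q - ((1 - α) / 2) • a) := by
      rw [hT₁ u₁, hT₁ u₂, ← smul_sub]
      congr 1
      rw [← hTdiff, ha, smul_sub]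
      abel
    rw [hT1diff, norm_smul, Real.norm_eq_abs,
      abs_of_pos (by positivity : (0:ℝ) < 2 / (1 + α))]
    calc (2 / (1 + α)) * ‖(1 - α) • Tmat C a + α • Tmat C q - ((1 - α) / 2) • a‖
        ≤ (2 / (1 + α)) * (((1 + α) / 2) * ‖a‖) := by
          have := key_est C a q α hα0 hα1 hq
          have h2 : (0:ℝ) ≤ 2 / (1 + α) := by positivity
          exact mul_le_mul_of_nonneg_left this h2
      _ = ‖a‖ := by field_simp
  · intro u
    rw [hT₁ u, smul_smul]
    have h1 : (1 + α) / 2 * (2 / (1 + α)) = 1 := by field_simp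
    rw [h1, one_smul]
    abel

end
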